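/- Let κ : ℕ → Cardinal be a sequence of nonzero cardinals and M_κ the metric fan as above. Let C⁰(M_κ, 2) = {f ∈ C(M_κ, 2) : f(∞) = 0} with the compact-open topology, where 2 = ℤ/2 is discrete. Then the map F : C⁰(M_κ, 2) → ⊕ₙ 2^{κₙ} defined by F(f) = (f|_{κₙ×{n}})ₙ is a topological group isomorphism onto the direct sum ⊕ₙ 2^{κₙ} endowed with the box topology (neighborhoods of 0 are products ∏ₙ Uₙ with Uₙ a neighborhood of 0 in 2^{κₙ}). -/

import Mathlib

open Topology Set

/-- The underlying set of the metric fan `M_κ`. -/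
def FanPt (κ : ℕ → Cardinal) : Type _ := Option (Σ n : ℕ, (κ n).out)

/-- The fan topology on `M_κ`. -/
instance fanTopology (κ : ℕ → Cardinal) : TopologicalSpace (FanPt κ) where
  IsOpen S := (none ∈ S) → ∃ N : ℕ, ∀ m : ℕ, N ≤ m → ∀ a : (κ m).out,
    (Option.some ⟨m, a⟩ : FanPt κ) ∈ S
  isOpen_univ := fun _ => ⟨0, fun _ _ _ => trivial⟩
  isOpen_inter := by
    intro s t hs ht hmem
    obtain ⟨Ns, hNs⟩ := hs hmem.1
    obtain ⟨Nt, hNt⟩ := ht hmem.2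
    exact ⟨max Ns Nt, fun m hm a =>
      ⟨hNs m (le_trans (le_max_left _ _) hm) a, hNt m (le_trans (le_max_right _ _) hm) a⟩⟩
  isOpen_sUnion := by
    intro S hS hmem
    obtain ⟨t, htS, hnt⟩ := hmem
    obtain ⟨N, hN⟩ := hS t htS hnt
    exact ⟨N, fun m hm a => ⟨t, htS, hN m hm a⟩⟩

/-- The subgroup `C⁰(M_κ, 2) = {f ∈ C(M_κ, 2) : f(∞) = 0}` of the topological group
`C(M_κ, ℤ/2)` with the compact-open topology. -/
noncomputable def Czero (κ : ℕ → Cardinal) : AddSubgroup C(FanPt κ, ZMod 2) where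
  carrier := {f | f none = 0}
  zero_mem' := rfl
  add_mem' := by intro a b ha hb; change a none + b none = 0; rw [ha, hb, add_zero]
  neg_mem' := by intro a ha; change -(a none) = 0; rw [ha, neg_zero]

/-- The box topology on a countable product. -/
def boxTopology (G : ℕ → Type*) [∀ n, TopologicalSpace (G n)] :
    TopologicalSpace (Π n, G n) :=
  TopologicalSpace.generateFrom
    {S | ∃ U : (n : ℕ) → Set (G n), (∀ n, IsOpen (U n)) ∧ S = Set.pi Set.univ U}

/-- The direct sum `⊕ₙ Gₙ`: the subgroup of eventually-zero sequences. -/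
def directSum (G : ℕ → Type*) [∀ n, AddGroup (G n)] : AddSubgroup (Π n, G n) where
  carrier := {f | ∀ᶠ n in Filter.atTop, f n = 0}
  zero_mem' := Filter.Eventually.of_forall fun _ => rfl
  add_mem' := by
    intro a b ha hb
    filter_upwards [ha, hb] with n h1 h2
    simp [Pi.add_apply, h1, h2]
  neg_mem' := by
    intro a ha
    filter_upwards [ha] with n h1
    simp [Pi.neg_apply, h1]

/-- The direct sum endowed with (the restriction of) the box topology. -/
def boxSumTopology (G : ℕ → Type*) [∀ n, AddGroup (G n)] [∀ n, TopologicalSpace (G n)] :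
    TopologicalSpace ↥(directSum G) :=
  (boxTopology G).induced Subtype.val

/-! ### Auxiliary material -/

section Aux

variable {κ : ℕ → Cardinal}

/-- Points of the fan. -/
def fanMk (κ : ℕ → Cardinal) (n : ℕ) (a : (κ n).out) : FanPt κ := Option.some ⟨n, a⟩

/-- The point `∞` of the fan. -/
def fanInf (κ : ℕ → Cardinal) : FanPt κ := Option.none

lemma fan_isOpen_iff (S : Set (FanPt κ)) :
    IsOpen S ↔ ((none ∈ S) → ∃ N : ℕ, ∀ m : ℕ, N ≤ m → ∀ a : (κ m).out,
      (Option.some ⟨m, a⟩ : FanPt κ) ∈ S) := Iff.rfl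

lemma eventually_zero (f : ↥(Czero κ)) :
    ∀ᶠ n in Filter.atTop,
      (fun a : (κ n).out => (f : C(FanPt κ, ZMod 2)) (Option.some ⟨n, a⟩)) = 0 := by
  have hopen : IsOpen ((f : C(FanPt κ, ZMod 2)) ⁻¹' {0}) :=
    (isOpen_discrete _).preimage (f : C(FanPt κ, ZMod 2)).continuous
  have hmem : (none : FanPt κ) ∈ (f : C(FanPt κ, ZMod 2)) ⁻¹' {0} := f.2
  obtain ⟨N, hN⟩ := (fan_isOpen_iff _).1 hopen hmem
  rw [Filter.eventually_atTop]
  exact ⟨N, fun m hm => funext fun a => hN m hm a⟩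

/-- The forward map on plain points. -/
noncomputable def Fwd (f : ↥(Czero κ)) : ↥(directSum (fun n => (κ n).out → ZMod 2)) :=
  ⟨fun n a => (f : C(FanPt κ, ZMod 2)) (Option.some ⟨n, a⟩), eventually_zero f⟩

/-- The backward map on plain points. -/
def bwdFun (κ : ℕ → Cardinal) (g : Π n, (κ n).out → ZMod 2) : FanPt κ → ZMod 2 :=
  fun x => match x with
  | Option.none => 0
  | Option.some p => g p.1 p.2

lemma bwd_continuous (g : ↥(directSum (fun n => (κ n).out → ZMod 2))) :
    Continuous (bwdFun κ g.val) := by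
  rw [continuous_def]
  intro S _
  rw [fan_isOpen_iff]
  intro hmem
  obtain ⟨N, hN⟩ := Filter.eventually_atTop.mp g.2
  refine ⟨N, fun m hm a => ?_⟩
  show g.val m a ∈ S
  have h0 : g.val m = 0 := hN m hm
  rw [h0]
  exact hmem

/-- The group isomorphism. -/
noncomputable def FanEquiv (κ : ℕ → Cardinal) :
    ↥(Czero κ) ≃+ ↥(directSum (fun n => (κ n).out → ZMod 2)) where
  toFun := Fwd
  invFun g := ⟨⟨bwdFun κ g.val, bwd_continuous g⟩, rfl⟩
  left_inv f := by
    apply Subtype.ext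
    apply ContinuousMap.ext
    intro x
    match x with
    | Option.none => exact (f.2 : (f : C(FanPt κ, ZMod 2)) none = 0).symm
    | Option.some p => rfl
  right_inv g := Subtype.ext (funext fun n => funext fun a => rfl)
  map_add' f g := Subtype.ext (funext fun n => funext fun a => rfl)

/-- Openness of sets avoiding `∞`. -/
lemma fan_isOpen_of_not_none {S : Set (FanPt κ)} (h : (none : FanPt κ) ∉ S) : IsOpen S :=
  (fan_isOpen_iff S).2 fun hm => absurd hm h

/-- Each level of a compact set is finite. -/
lemma level_finite {K : Set (FanPt κ)} (hK : IsCompact K) (n : ℕ) :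
    {a : (κ n).out | (Option.some ⟨n, a⟩ : FanPt κ) ∈ K}.Finite := by
  set c : Option ((κ n).out) → Set (FanPt κ) := fun i =>
    match i with
    | Option.none => {x | ∀ a : (κ n).out, x ≠ Option.some ⟨n, a⟩}
    | Option.some a => {Option.some ⟨n, a⟩}
  have hopen : ∀ i, IsOpen (c i) := by
    intro i
    match i with
    | Option.none =>
      rw [fan_isOpen_iff]
      intro _
      refine ⟨n + 1, fun m hm b a h => ?_⟩
      have : (⟨m, b⟩ : Σ k, (κ k).out) = ⟨n, a⟩ := Option.some.inj h
      have hmn : m = n := congrArg Sigma.fst this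
      omega
    | Option.some a =>
      apply fan_isOpen_of_not_none
      intro h
      exact Option.some_ne_none _ (show (none : Option (Σ k, (κ k).out)) = Option.some ⟨n, a⟩ from h).symm
  have hcov : K ⊆ ⋃ i, c i := by
    intro x _
    match x with
    | Option.none =>
      exact Set.mem_iUnion.2 ⟨Option.none, fun a h => Option.some_ne_none _ h.symm⟩
    | Option.some ⟨m, b⟩ =>
      by_cases hmn : m = n
      · subst hmn
        exact Set.mem_iUnion.2 ⟨Option.some b, rfl⟩
      · refine Set.mem_iUnion.2 ⟨Option.none, fun a h => ?_⟩
        exact hmn (congrArg Sigma.fst (Option.some.inj h))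
  obtain ⟨t, ht⟩ := hK.elim_finite_subcover c hopen hcov
  have hsub : {a : (κ n).out | (Option.some ⟨n, a⟩ : FanPt κ) ∈ K} ⊆
      (fun a : (κ n).out => Option.some a) ⁻¹' (t : Set (Option ((κ n).out))) := by
    intro a ha
    obtain ⟨i, hit, hi⟩ := Set.mem_iUnion₂.1 (ht ha)
    match i with
    | Option.none => exact absurd rfl (hi a)
    | Option.some b =>
      have hb : (⟨n, a⟩ : Σ k, (κ k).out) = ⟨n, b⟩ := Option.some.inj hi
      have : a = b := by
        have h2 := (Sigma.mk.inj_iff.1 hb).2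
        exact eq_of_heq h2
      rw [this]
      exact hit
  exact (t.finite_toSet.preimage ((Option.some_injective _).injOn)).subset hsub

/-- The canonical compact set attached to a choice of finite levels. -/
lemma isCompact_fanK (I : ∀ n, Finset ((κ n).out)) :
    IsCompact (insert (fanInf κ)
      (Set.range (fun p : Σ n, {a // a ∈ I n} => fanMk κ p.1 p.2.1))) := by
  have ht : Filter.Tendsto (fun p : Σ n, {a // a ∈ I n} => fanMk κ p.1 p.2.1)
      Filter.cofinite (𝓝 (fanInf κ)) := by
    rw [tendsto_nhds]
    intro S hS hmem
    obtain ⟨N, hN⟩ := (fan_isOpen_iff S).1 hS hmem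
    rw [Filter.mem_cofinite]
    have hfin : (⋃ m ∈ (Finset.range N : Set ℕ),
        Set.range (fun a : {a // a ∈ I m} => (⟨m, a⟩ : Σ n, {a // a ∈ I n}))).Finite :=
      Set.Finite.biUnion (Finset.range N).finite_toSet (fun m _ => Set.finite_range _)
    apply hfin.subset
    intro p hp
    have hlt : p.1 < N := by
      by_contra h
      exact hp (hN p.1 (le_of_not_gt h) p.2.1)
    refine Set.mem_biUnion (show p.1 ∈ (Finset.range N : Set ℕ) from Finset.mem_range.2 hlt) ?_
    exact ⟨p.2, Sigma.eta p⟩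
  exact ht.isCompact_insert_range_of_cofinite

/-- A sufficient criterion for openness in an induced topology. -/
lemma isOpen_induced_of_forall {X Y : Type*} {t : TopologicalSpace Y} {f : X → Y} {P : Set X}
    (h : ∀ x ∈ P, ∃ S, IsOpen[t] S ∧ f x ∈ S ∧ f ⁻¹' S ⊆ P) : IsOpen[t.induced f] P := by
  letI := t.induced f
  rw [isOpen_iff_forall_mem_open]
  intro x hx
  obtain ⟨S, hS, hxS, hsub⟩ := h x hx
  exact ⟨f ⁻¹' S, hsub, hS.preimage continuous_induced_dom, hxS⟩

lemma Fwd_continuous (κ : ℕ → Cardinal) :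
    Continuous[inferInstance, boxSumTopology (fun n => (κ n).out → ZMod 2)]
      (Fwd (κ := κ)) := by
  show Continuous[_, ((boxTopology _).induced Subtype.val)] _
  rw [continuous_induced_rng]
  unfold boxTopology
  rw [continuous_generateFrom_iff]
  rintro S ⟨U, hU, rfl⟩
  rw [isOpen_iff_forall_mem_open]
  intro f hf
  have hf' : ∀ n, (Fwd f).val n ∈ U n := by
    intro n
    exact hf n (Set.mem_univ n)
  -- choose finite supports for each level
  have hchoice : ∀ n, ∃ (I : Finset ((κ n).out)),
      ∀ h : (κ n).out → ZMod 2, (∀ a ∈ I, h a = (Fwd f).val n a) → h ∈ U n := by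
    intro n
    obtain ⟨I, u, hu, hsub⟩ := isOpen_pi_iff.1 (hU n) _ (hf' n)
    refine ⟨I, fun h hh => hsub ?_⟩
    intro a ha
    rw [hh a ha]
    exact (hu a ha).2
  choose I hI using hchoice
  set K : Set (FanPt κ) := insert (fanInf κ)
    (Set.range (fun p : Σ n, {a // a ∈ I n} => fanMk κ p.1 p.2.1)) with hKdef
  have hK : IsCompact K := isCompact_fanK I
  set W : Set C(FanPt κ, ZMod 2) :=
    ⋂ v : ZMod 2, {g : C(FanPt κ, ZMod 2) |
      Set.MapsTo g (K ∩ (f : C(FanPt κ, ZMod 2)) ⁻¹' {v}) {v}} with hWdef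
  have hWopen : IsOpen W := by
    apply isOpen_iInter_of_finite
    intro v
    exact ContinuousMap.isOpen_setOf_mapsTo
      (hK.inter_right ((isClosed_discrete _).preimage (f : C(FanPt κ, ZMod 2)).continuous))
      (isOpen_discrete _)
  refine ⟨Subtype.val ⁻¹' W, ?_, hWopen.preimage continuous_subtype_val, ?_⟩
  · intro g hg
    have hagree : ∀ x ∈ K, (g : C(FanPt κ, ZMod 2)) x = (f : C(FanPt κ, ZMod 2)) x := by
      intro x hx
      have := Set.mem_iInter.1 hg ((f : C(FanPt κ, ZMod 2)) x) ⟨hx, rfl⟩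
      exact this
    intro n _
    apply hI n
    intro a ha
    have hmem : (Option.some ⟨n, a⟩ : FanPt κ) ∈ K :=
      Set.mem_insert_iff.2 (Or.inr ⟨⟨n, ⟨a, ha⟩⟩, rfl⟩)
    exact hagree _ hmem
  · apply Set.mem_iInter.2
    intro v
    intro x hx
    exact hx.2

lemma Fwd_symm_continuous (κ : ℕ → Cardinal) :
    Continuous[boxSumTopology (fun n => (κ n).out → ZMod 2), inferInstance]
      ⇑(FanEquiv κ).symm := by
  show Continuous[boxSumTopology _, TopologicalSpace.induced Subtype.val ContinuousMap.compactOpen] _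
  rw [continuous_induced_rng, ContinuousMap.compactOpen_eq, continuous_generateFrom_iff]
  rintro S hS
  rw [Set.mem_image2] at hS
  obtain ⟨K, hK, V, hV, rfl⟩ := hS
  show IsOpen[(boxTopology _).induced Subtype.val] _
  apply isOpen_induced_of_forall
  intro g hg
  have hgK : Set.MapsTo (((FanEquiv κ).symm g : ↥(Czero κ)) : C(FanPt κ, ZMod 2)) K V := hg
  -- the finite levels of K
  have hfin : ∀ n, {a : (κ n).out | (Option.some ⟨n, a⟩ : FanPt κ) ∈ K}.Finite :=
    fun n => level_finite hK n
  refine ⟨Set.pi Set.univ (fun n =>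
    {h : (κ n).out → ZMod 2 | ∀ a, (Option.some ⟨n, a⟩ : FanPt κ) ∈ K → h a = g.val n a}),
    ?_, ?_, ?_⟩
  · show IsOpen[TopologicalSpace.generateFrom _] _
    apply TopologicalSpace.isOpen_generateFrom_of_mem
    refine ⟨_, fun n => ?_, rfl⟩
    have : {h : (κ n).out → ZMod 2 | ∀ a, (Option.some ⟨n, a⟩ : FanPt κ) ∈ K → h a = g.val n a}
        = ⋂ a ∈ {a : (κ n).out | (Option.some ⟨n, a⟩ : FanPt κ) ∈ K},
          (fun h : (κ n).out → ZMod 2 => h a) ⁻¹' {g.val n a} := by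
      ext h
      simp [Set.mem_iInter]
    rw [this]
    exact (hfin n).isOpen_biInter (fun a _ =>
      (isOpen_discrete _).preimage (continuous_apply a))
  · intro n _
    intro a _
    rfl
  · intro g' hg'
    show Set.MapsTo (((FanEquiv κ).symm g' : ↥(Czero κ)) : C(FanPt κ, ZMod 2)) K V
    intro x hx
    match x with
    | Option.none =>
      show (0 : ZMod 2) ∈ V
      exact hgK hx
    | Option.some ⟨n, a⟩ =>
      show g'.val n a ∈ V
      have h1 : g'.val n a = g.val n a := hg' n (Set.mem_univ n) a hx
      rw [h1]
      exact hgK hx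

end Aux

/-- The map `F : C⁰(M_κ, 2) → ⊕ₙ 2^{κₙ}`, `F(f) = (f|_{κₙ × {n}})ₙ`, is a
topological group isomorphism onto the direct sum `⊕ₙ 2^{κₙ}` with the box topology. -/
theorem statement3 (κ : ℕ → Cardinal) (hκ : ∀ n, κ n ≠ 0) :
    ∃ F : ↥(Czero κ) ≃+ ↥(directSum (fun n => (κ n).out → ZMod 2)),
      (∀ (f : ↥(Czero κ)) (n : ℕ) (a : (κ n).out),
        ((F f : ↥(directSum (fun n => (κ n).out → ZMod 2))) :
            Π n, (κ n).out → ZMod 2) n a = (f : C(FanPt κ, ZMod 2)) (Option.some ⟨n, a⟩)) ∧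
      Continuous[inferInstance, boxSumTopology (fun n => (κ n).out → ZMod 2)] ⇑F ∧
      Continuous[boxSumTopology (fun n => (κ n).out → ZMod 2), inferInstance] ⇑F.symm := by
  exact ⟨FanEquiv κ, fun f n a => rfl, Fwd_continuous κ, Fwd_symm_continuous κ⟩
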